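/- Let C and C' be label-pure partitions of Fin n into nonempty clusters such that C' refines C (every cluster of C' is contained in some cluster of C). If (w̄, b̄) minimizes F_C and (w̄', b̄') minimizes F_{C'}, then F_C(w̄, b̄) ≤ F_{C'}(w̄', b̄'). Moreover F_{C'}(w̄', b̄') ≤ E(w, b) for all (w, b), so the optimal aggregated SVM objective values are nondecreasing under declustering and never exceed the original SVM optimal value. -/

import Mathlib

open Finset
open scoped RealInnerProductSpace

noncomputable section

/-- The cluster of index `k` for the cluster-assignment map `c`. -/
def cluster {n K : ℕ} (c : Fin n → Fin K) (k : Fin K) : Finset (Fin n) :=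
  Finset.univ.filter fun i => c i = k

/-- Centroid of the cluster of index `k`. -/
def centroid {n m K : ℕ} (x : Fin n → EuclideanSpace ℝ (Fin m))
    (c : Fin n → Fin K) (k : Fin K) : EuclideanSpace ℝ (Fin m) :=
  ((cluster c k).card : ℝ)⁻¹ • ∑ i ∈ cluster c k, x i

/-- The soft-margin linear SVM objective (hinge-loss form). -/
def svmE {n m : ℕ} (x : Fin n → EuclideanSpace ℝ (Fin m)) (y : Fin n → ℝ)
    (M : ℝ) (w : EuclideanSpace ℝ (Fin m)) (b : ℝ) : ℝ :=
  (1 / 2) * ‖w‖ ^ 2 + M * ∑ i, max 0 (1 - y i * (⟪w, x i⟫ + b))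

/-- The weighted aggregated SVM objective for a label-pure partition with
common labels `yhat`. -/
def svmF {n m K : ℕ} (x : Fin n → EuclideanSpace ℝ (Fin m))
    (c : Fin n → Fin K) (yhat : Fin K → ℝ) (M : ℝ)
    (w : EuclideanSpace ℝ (Fin m)) (b : ℝ) : ℝ :=
  (1 / 2) * ‖w‖ ^ 2 + M * ∑ k, ((cluster c k).card : ℝ) *
    max 0 (1 - yhat k * (⟪w, centroid x c k⟫ + b))

lemma cluster_card_pos {n K : ℕ} {c : Fin n → Fin K} (hsurj : Function.Surjective c)
    (k : Fin K) : 0 < (cluster c k).card := by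
  obtain ⟨i, hi⟩ := hsurj k
  exact Finset.card_pos.2 ⟨i, by simp [cluster, hi]⟩

lemma cluster_key {n m K : ℕ} (x : Fin n → EuclideanSpace ℝ (Fin m)) (y : Fin n → ℝ)
    (c : Fin n → Fin K) (hsurj : Function.Surjective c)
    (yhat : Fin K → ℝ) (hpure : ∀ i, yhat (c i) = y i)
    (w : EuclideanSpace ℝ (Fin m)) (b : ℝ) (k : Fin K) :
    ((cluster c k).card : ℝ) * (1 - yhat k * (⟪w, _root_.centroid x c k⟫ + b)) =
      ∑ i ∈ cluster c k, (1 - y i * (⟪w, x i⟫ + b)) := by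
  have hN : (0:ℝ) < ((cluster c k).card : ℝ) := by exact_mod_cast cluster_card_pos hsurj k
  set N : ℝ := ((cluster c k).card : ℝ) with hNdef
  set S : ℝ := ∑ i ∈ cluster c k, ⟪w, x i⟫ with hSdef
  have hy' : ∀ i ∈ cluster c k, y i = yhat k := by
    intro i hi
    have hci : c i = k := by simpa [cluster] using hi
    rw [← hpure i, hci]
  have hinner : ⟪w, _root_.centroid x c k⟫ = N⁻¹ * S := by
    simp only [_root_.centroid, inner_smul_right, inner_sum, real_inner_smul_right, hSdef, hNdef]
  have hrhs : ∑ i ∈ cluster c k, (1 - y i * (⟪w, x i⟫ + b)) = N - yhat k * (S + N * b) := by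
    rw [Finset.sum_congr rfl fun i hi => by rw [hy' i hi]]
    rw [Finset.sum_sub_distrib, Finset.sum_const, ← Finset.mul_sum, Finset.sum_add_distrib,
      Finset.sum_const]
    simp only [nsmul_eq_mul, mul_one, hNdef, hSdef]
  rw [hinner, hrhs]
  have hNne : N ≠ 0 := ne_of_gt hN
  calc N * (1 - yhat k * (N⁻¹ * S + b))
      = N - yhat k * ((N * N⁻¹) * S + N * b) := by ring
    _ = N - yhat k * (S + N * b) := by rw [mul_inv_cancel₀ hNne, one_mul]

lemma hinge_sum_le {α : Type*} (s : Finset α) (a t : α → ℝ) (ha : ∀ i ∈ s, 0 ≤ a i) :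
    max 0 (∑ i ∈ s, a i * t i) ≤ ∑ i ∈ s, a i * max 0 (t i) := by
  apply max_le
  · exact Finset.sum_nonneg fun i hi => mul_nonneg (ha i hi) (le_max_left 0 _)
  · exact Finset.sum_le_sum fun i hi => mul_le_mul_of_nonneg_left (le_max_right 0 _) (ha i hi)

lemma svmF_mono {n m K K' : ℕ}
    (x : Fin n → EuclideanSpace ℝ (Fin m)) (y : Fin n → ℝ)
    (M : ℝ) (hM : 0 ≤ M)
    (c : Fin n → Fin K) (hsurj : Function.Surjective c)
    (yhat : Fin K → ℝ) (hpure : ∀ i, yhat (c i) = y i)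
    (c' : Fin n → Fin K') (hsurj' : Function.Surjective c')
    (yhat' : Fin K' → ℝ) (hpure' : ∀ i, yhat' (c' i) = y i)
    (hrefine : ∀ i j : Fin n, c' i = c' j → c i = c j)
    (w : EuclideanSpace ℝ (Fin m)) (b : ℝ) :
    svmF x c yhat M w b ≤ svmF x c' yhat' M w b := by
  classical
  set g : Fin K' → Fin K := fun k' => c (hsurj' k').choose with hgdef
  have hg : ∀ i, g (c' i) = c i := fun i =>
    hrefine _ _ ((hsurj' (c' i)).choose_spec)
  have key : ∀ k : Fin K,
      ((cluster c k).card : ℝ) * max 0 (1 - yhat k * (⟪w, _root_.centroid x c k⟫ + b)) ≤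
      ∑ k' ∈ univ.filter (fun k' => g k' = k), ((cluster c' k').card : ℝ) *
        max 0 (1 - yhat' k' * (⟪w, _root_.centroid x c' k'⟫ + b)) := by
    intro k
    have hN : (0:ℝ) ≤ ((cluster c k).card : ℝ) := Nat.cast_nonneg _
    have h1 : ((cluster c k).card : ℝ) * max 0 (1 - yhat k * (⟪w, _root_.centroid x c k⟫ + b))
        = max 0 (((cluster c k).card : ℝ) * (1 - yhat k * (⟪w, _root_.centroid x c k⟫ + b))) := by
      rw [mul_max_of_nonneg _ _ hN, mul_zero]
    -- split the cluster of k into the clusters of c' lying above it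
    have hU : cluster c k = (univ.filter (fun k' => g k' = k)).biUnion (cluster c') := by
      ext i
      simp only [cluster, Finset.mem_filter, Finset.mem_univ, true_and, Finset.mem_biUnion]
      constructor
      · intro h
        refine ⟨c' i, ?_, rfl⟩
        rw [hg i, h]
      · rintro ⟨k', hk', rfl⟩
        rw [← hg i, hk']
    have hdisj : Set.PairwiseDisjoint
        ↑(univ.filter (fun k' => g k' = k)) (cluster c') := by
      intro k1 _ k2 _ hne
      apply Finset.disjoint_left.2
      intro i hi1 hi2
      apply hne
      have h1 : c' i = k1 := by simpa [cluster] using hi1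
      have h2 : c' i = k2 := by simpa [cluster] using hi2
      rw [← h1, h2]
    have hsplit : ((cluster c k).card : ℝ) * (1 - yhat k * (⟪w, _root_.centroid x c k⟫ + b))
        = ∑ k' ∈ univ.filter (fun k' => g k' = k), ((cluster c' k').card : ℝ) *
            (1 - yhat' k' * (⟪w, _root_.centroid x c' k'⟫ + b)) := by
      rw [cluster_key x y c hsurj yhat hpure w b k, hU, Finset.sum_biUnion hdisj]
      exact Finset.sum_congr rfl fun k' _ =>
        (cluster_key x y c' hsurj' yhat' hpure' w b k').symm
    rw [h1, hsplit]
    exact hinge_sum_le _ _ _ fun k' _ => Nat.cast_nonneg _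
  unfold svmF
  apply add_le_add le_rfl
  apply mul_le_mul_of_nonneg_left _ hM
  calc ∑ k, ((cluster c k).card : ℝ) *
        max 0 (1 - yhat k * (⟪w, _root_.centroid x c k⟫ + b))
      ≤ ∑ k, ∑ k' ∈ univ.filter (fun k' => g k' = k), ((cluster c' k').card : ℝ) *
          max 0 (1 - yhat' k' * (⟪w, _root_.centroid x c' k'⟫ + b)) :=
        Finset.sum_le_sum fun k _ => key k
    _ = ∑ k', ((cluster c' k').card : ℝ) *
          max 0 (1 - yhat' k' * (⟪w, _root_.centroid x c' k'⟫ + b)) := by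
        rw [← Finset.sum_fiberwise univ g]

lemma svmF_id_eq_svmE {n m : ℕ} (x : Fin n → EuclideanSpace ℝ (Fin m)) (y : Fin n → ℝ)
    (M : ℝ) (w : EuclideanSpace ℝ (Fin m)) (b : ℝ) :
    svmF x (id : Fin n → Fin n) y M w b = svmE x y M w b := by
  have hcl : ∀ k : Fin n, cluster (id : Fin n → Fin n) k = {k} := by
    intro k; ext i; simp [cluster]
  unfold svmF svmE
  congr 1
  congr 1
  apply Finset.sum_congr rfl
  intro k _
  simp [hcl, _root_.centroid]

/-- If the label-pure partition given by `c'` refines the label-pure partition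
given by `c`, and `(w̄, b̄)`, `(w̄', b̄')` minimize the respective aggregated SVM
objectives, then the optimal aggregated values are nondecreasing under this
refinement and never exceed the original SVM objective. -/
theorem svm_refinement_monotone (n m K K' : ℕ)
    (x : Fin n → EuclideanSpace ℝ (Fin m)) (y : Fin n → ℝ)
    (hy : ∀ i, y i = 1 ∨ y i = -1) (M : ℝ) (hM : 0 < M)
    (c : Fin n → Fin K) (hsurj : Function.Surjective c)
    (yhat : Fin K → ℝ) (hpure : ∀ i, yhat (c i) = y i)
    (c' : Fin n → Fin K') (hsurj' : Function.Surjective c')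
    (yhat' : Fin K' → ℝ) (hpure' : ∀ i, yhat' (c' i) = y i)
    (hrefine : ∀ i j : Fin n, c' i = c' j → c i = c j)
    (wbar : EuclideanSpace ℝ (Fin m)) (bbar : ℝ)
    (wbar' : EuclideanSpace ℝ (Fin m)) (bbar' : ℝ)
    (hmin : ∀ (w : EuclideanSpace ℝ (Fin m)) (b : ℝ),
      svmF x c yhat M wbar bbar ≤ svmF x c yhat M w b)
    (hmin' : ∀ (w : EuclideanSpace ℝ (Fin m)) (b : ℝ),
      svmF x c' yhat' M wbar' bbar' ≤ svmF x c' yhat' M w b) :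
    svmF x c yhat M wbar bbar ≤ svmF x c' yhat' M wbar' bbar' ∧
      ∀ (w : EuclideanSpace ℝ (Fin m)) (b : ℝ),
        svmF x c' yhat' M wbar' bbar' ≤ svmE x y M w b := by
  constructor
  · exact le_trans (hmin wbar' bbar')
      (svmF_mono x y M hM.le c hsurj yhat hpure c' hsurj' yhat' hpure' hrefine wbar' bbar')
  · intro w b
    refine le_trans (hmin' w b) ?_
    rw [← svmF_id_eq_svmE x y M w b]
    exact svmF_mono x y M hM.le c' hsurj' yhat' hpure' id Function.surjective_id y
      (fun i => rfl) (fun i j h => congrArg c' h) w b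

end
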